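/- A dynamic policy ↣ is local with respect to the relations {∼^◇_u}_{u∈D} if and only if it is local with respect to the relations {∼^□_u}_{u∈D}. -/
import Mathlib


open Classical

/-- Binary trees over actions, values of the `ta` purge functions. -/
inductive TATree (A : Type) : Type where
  | eps : TATree A
  | node : TATree A → TATree A → A → TATree A

/-- Run a deterministic system along a trace (newest action at the head of the list). -/
def runL {S A : Type} (step : S → A → S) (s0 : S) : List A → S
  | [] => s0
  | a :: α => step (runL step s0 α) a

/-- The permissive purge function `ta^◇` for a dynamic policy `P`. -/
noncomputable def taD {D A : Type} (dm : A → D) (P : List A → D → D → Prop) :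
    List A → D → TATree A
  | [], _ => TATree.eps
  | a :: α, u =>
    if P α (dm a) u then TATree.node (taD dm P α u) (taD dm P α (dm a)) a
    else taD dm P α u

/-- The unwinding relations: smallest family of equivalence relations on traces
satisfying WSC and DLR with respect to the dynamic policy `P`. -/
inductive Unw {D A : Type} (dm : A → D) (P : List A → D → D → Prop) :
    D → List A → List A → Prop where
  | refl (u : D) (α : List A) : Unw dm P u α α
  | symm {u : D} {α β : List A} : Unw dm P u α β → Unw dm P u β α
  | trans {u : D} {α β γ : List A} : Unw dm P u α β → Unw dm P u β γ → Unw dm P u α γ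
  | dlr (u : D) (α : List A) (a : A) : ¬ P α (dm a) u → Unw dm P u (a :: α) α
  | wsc (u : D) {α β : List A} (a : A) :
      Unw dm P u α β → Unw dm P (dm a) α β → Unw dm P u (a :: α) (a :: β)

/-- The prohibitive purge function `ta^□`, whose condition is distributed knowledge
of the policy edge, interpreted over the Kripke structure given by the unwinding relations. -/
noncomputable def taB {D A : Type} (dm : A → D) (P : List A → D → D → Prop) :
    List A → D → TATree A
  | [], _ => TATree.eps
  | a :: α, u =>
    if (∀ β, Unw dm P u α β → Unw dm P (dm a) α β → P β (dm a) u) then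
      TATree.node (taB dm P α u) (taB dm P α (dm a)) a
    else taB dm P α u

section Aux
variable {D A : Type} (dm : A → D) (P : List A → D → D → Prop)

theorem taD_cons (a : A) (α : List A) (u : D) :
    taD dm P (a :: α) u =
      if P α (dm a) u then TATree.node (taD dm P α u) (taD dm P α (dm a)) a
      else taD dm P α u := rfl

theorem taB_cons (a : A) (α : List A) (u : D) :
    taB dm P (a :: α) u =
      if (∀ β, Unw dm P u α β → Unw dm P (dm a) α β → P β (dm a) u) then
        TATree.node (taB dm P α u) (taB dm P α (dm a)) a
      else taB dm P α u := rfl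

/-- kernel of taD is contained in Unw -/
theorem taD_ker_unw : ∀ α β (u : D), taD dm P α u = taD dm P β u → Unw dm P u α β := by
  have key : ∀ n α β (u : D), α.length + β.length ≤ n →
      taD dm P α u = taD dm P β u → Unw dm P u α β := by
    intro n
    induction n with
    | zero =>
      intro α β u hlen _
      match α, β with
      | [], [] => exact .refl u []
      | a :: α, _ => simp at hlen
      | _, b :: β => simp at hlen
    | succ n ih =>
      intro α β u hlen h
      match α, β with
      | [], [] => exact .refl u []
      | [], b :: β =>
        rw [taD_cons] at h
        by_cases hc : P β (dm b) u
        · rw [if_pos hc] at h; exact absurd h (by intro h; cases h)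
        · rw [if_neg hc] at h
          exact .trans (ih [] β u (by simp at hlen ⊢; omega) h) (.symm (.dlr u β b hc))
      | a :: α, [] =>
        rw [taD_cons] at h
        by_cases hc : P α (dm a) u
        · rw [if_pos hc] at h; exact absurd h (by intro h; cases h)
        · rw [if_neg hc] at h
          exact .trans (.dlr u α a hc) (ih α [] u (by simp at hlen ⊢; omega) h)
      | a :: α, b :: β =>
        rw [taD_cons, taD_cons] at h
        by_cases hca : P α (dm a) u
        · by_cases hcb : P β (dm b) u
          · rw [if_pos hca, if_pos hcb] at h
            injection h with h1 h2 h3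
            subst h3
            exact .wsc u a (ih α β u (by simp at hlen ⊢; omega) h1)
              (ih α β (dm a) (by simp at hlen ⊢; omega) h2)
          · rw [if_neg hcb] at h
            have h' : taD dm P (a :: α) u = taD dm P β u := by
              rw [taD_cons]; exact h
            exact .trans (ih (a :: α) β u (by simp at hlen ⊢; omega) h')
              (.symm (.dlr u β b hcb))
        · rw [if_neg hca] at h
          have h' : taD dm P α u = taD dm P (b :: β) u := by
            rw [taD_cons]; exact h
          exact .trans (.dlr u α a hca) (ih α (b :: β) u (by simp at hlen ⊢; omega) h')
  intro α β u h
  exact key (α.length + β.length) α β u le_rfl h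

/-- Unw is contained in kernel of taB -/
theorem unw_taB_ker : ∀ {u : D} {α β : List A}, Unw dm P u α β →
    taB dm P α u = taB dm P β u := by
  intro u α β h
  induction h with
  | refl => rfl
  | symm _ ih => exact ih.symm
  | trans _ _ ih1 ih2 => exact ih1.trans ih2
  | dlr u α a hc =>
    rw [taB_cons, if_neg]
    intro hall
    exact hc (hall α (.refl u α) (.refl (dm a) α))
  | wsc u a h1 h2 ih1 ih2 =>
    rename_i α β
    rw [taB_cons, taB_cons]
    have hiff : (∀ γ, Unw dm P u α γ → Unw dm P (dm a) α γ → P γ (dm a) u) ↔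
        (∀ γ, Unw dm P u β γ → Unw dm P (dm a) β γ → P γ (dm a) u) := by
      constructor
      · intro hall γ hg1 hg2
        exact hall γ (.trans h1 hg1) (.trans h2 hg2)
      · intro hall γ hg1 hg2
        exact hall γ (.trans (.symm h1) hg1) (.trans (.symm h2) hg2)
    by_cases hc : ∀ γ, Unw dm P u α γ → Unw dm P (dm a) α γ → P γ (dm a) u
    · rw [if_pos hc, if_pos (hiff.mp hc), ih1, ih2]
    · rw [if_neg hc, if_neg (fun hb => hc (hiff.mpr hb)), ih1]

/-- kernel of taB is contained in Unw -/
theorem taB_ker_unw : ∀ α β (u : D), taB dm P α u = taB dm P β u → Unw dm P u α β := by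
  have skip : ∀ (a : A) α (u : D),
      ¬ (∀ β, Unw dm P u α β → Unw dm P (dm a) α β → P β (dm a) u) →
      Unw dm P u (a :: α) α := by
    intro a α u hc
    push_neg at hc
    obtain ⟨γ, hg1, hg2, hg3⟩ := hc
    exact .trans (.wsc u a hg1 hg2) (.trans (.dlr u γ a hg3) (.symm hg1))
  have key : ∀ n α β (u : D), α.length + β.length ≤ n →
      taB dm P α u = taB dm P β u → Unw dm P u α β := by
    intro n
    induction n with
    | zero =>
      intro α β u hlen _
      match α, β with
      | [], [] => exact .refl u []
      | a :: α, _ => simp at hlen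
      | _, b :: β => simp at hlen
    | succ n ih =>
      intro α β u hlen h
      match α, β with
      | [], [] => exact .refl u []
      | [], b :: β =>
        rw [taB_cons] at h
        by_cases hc : ∀ γ, Unw dm P u β γ → Unw dm P (dm b) β γ → P γ (dm b) u
        · rw [if_pos hc] at h; exact absurd h (by intro h; cases h)
        · rw [if_neg hc] at h
          exact .trans (ih [] β u (by simp at hlen ⊢; omega) h) (.symm (skip b β u hc))
      | a :: α, [] =>
        rw [taB_cons] at h
        by_cases hc : ∀ γ, Unw dm P u α γ → Unw dm P (dm a) α γ → P γ (dm a) u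
        · rw [if_pos hc] at h; exact absurd h (by intro h; cases h)
        · rw [if_neg hc] at h
          exact .trans (skip a α u hc) (ih α [] u (by simp at hlen ⊢; omega) h)
      | a :: α, b :: β =>
        rw [taB_cons, taB_cons] at h
        by_cases hca : ∀ γ, Unw dm P u α γ → Unw dm P (dm a) α γ → P γ (dm a) u
        · by_cases hcb : ∀ γ, Unw dm P u β γ → Unw dm P (dm b) β γ → P γ (dm b) u
          · rw [if_pos hca, if_pos hcb] at h
            injection h with h1 h2 h3
            subst h3
            exact .wsc u a (ih α β u (by simp at hlen ⊢; omega) h1)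
              (ih α β (dm a) (by simp at hlen ⊢; omega) h2)
          · rw [if_neg hcb] at h
            have h' : taB dm P (a :: α) u = taB dm P β u := by
              rw [taB_cons]; exact h
            exact .trans (ih (a :: α) β u (by simp at hlen ⊢; omega) h')
              (.symm (skip b β u hcb))
        · rw [if_neg hca] at h
          have h' : taB dm P α u = taB dm P (b :: β) u := by
            rw [taB_cons]; exact h
          exact .trans (skip a α u hca) (ih α (b :: β) u (by simp at hlen ⊢; omega) h')
  intro α β u h
  exact key (α.length + β.length) α β u le_rfl h

/-- under ◇-locality, Unw is contained in kernel of taD -/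
theorem unw_taD_ker
    (loc : ∀ u v (α β : List A), taD dm P α u = taD dm P β u →
        taD dm P α v = taD dm P β v → (P α u v ↔ P β u v)) :
    ∀ {u : D} {α β : List A}, Unw dm P u α β → taD dm P α u = taD dm P β u := by
  intro u α β h
  induction h with
  | refl => rfl
  | symm _ ih => exact ih.symm
  | trans _ _ ih1 ih2 => exact ih1.trans ih2
  | dlr u α a hc => rw [taD_cons, if_neg hc]
  | wsc u a h1 h2 ih1 ih2 =>
    rename_i α β
    rw [taD_cons, taD_cons]
    have hiff := loc (dm a) u α β ih2 ih1
    by_cases hc : P α (dm a) u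
    · rw [if_pos hc, if_pos (hiff.mp hc), ih1, ih2]
    · rw [if_neg hc, if_neg (fun hb => hc (hiff.mpr hb)), ih1]

end Aux

/-- a policy is local with respect to the kernels of `ta^◇` iff it is local
with respect to the kernels of `ta^□`. -/
theorem statement_6 {D A : Type} (dm : A → D) (P : List A → D → D → Prop)
    (hrefl : ∀ α u, P α u u) :
    (∀ u v (α β : List A), taD dm P α u = taD dm P β u →
        taD dm P α v = taD dm P β v → (P α u v ↔ P β u v)) ↔
    (∀ u v (α β : List A), taB dm P α u = taB dm P β u →
        taB dm P α v = taB dm P β v → (P α u v ↔ P β u v)) := by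
  constructor
  · intro loc u v α β hu hv
    exact loc u v α β (unw_taD_ker dm P loc (taB_ker_unw dm P α β u hu))
      (unw_taD_ker dm P loc (taB_ker_unw dm P α β v hv))
  · intro loc u v α β hu hv
    exact loc u v α β (unw_taB_ker dm P (taD_ker_unw dm P α β u hu))
      (unw_taB_ker dm P (taD_ker_unw dm P α β v hv))
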